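/- Let U be a nonnegative random variable and C ≥ 0 a constant such that P(U > t) ~ C/√t as t → ∞ (i.e. √t · P(U > t) → C). Then lim_{λ → 0⁺} λ^{-1/2} E[1 - e^{-λU}] = C√π. -/

import Mathlib

open MeasureTheory Real Filter Set

theorem stmt1 {Ω : Type*} [MeasurableSpace Ω] (μ : Measure Ω) [IsProbabilityMeasure μ]
    (U : Ω → ℝ) (hU : Measurable U) (hU0 : ∀ ω, 0 ≤ U ω) (C : ℝ) (hC : 0 ≤ C)
    (htail : Tendsto (fun t => Real.sqrt t * (μ {ω | t < U ω}).toReal) atTop (nhds C)) :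
    Tendsto (fun l : ℝ => l ^ (-(1:ℝ)/2) * ∫ ω, (1 - Real.exp (-(l * U ω))) ∂μ)
      (nhdsWithin 0 (Ioi 0)) (nhds (C * Real.sqrt π)) := by
  set P : ℝ → ℝ := fun t => (μ {ω | t < U ω}).toReal with hPdef
  have hPmeas : Measurable P := by
    apply Measurable.ennreal_toReal
    exact Antitone.measurable (fun s t hst => measure_mono (fun ω h => lt_of_le_of_lt hst h))
  have hPnn : ∀ t, 0 ≤ P t := fun t => ENNReal.toReal_nonneg
  have hPle1 : ∀ t, P t ≤ 1 := by
    intro t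
    calc P t ≤ (μ univ).toReal :=
          ENNReal.toReal_mono (measure_ne_top μ _) (measure_mono (subset_univ _))
      _ = 1 := by simp
  -- rpow to sqrt
  have hrpow : ∀ l : ℝ, 0 < l → l ^ (-(1:ℝ)/2) = (Real.sqrt l)⁻¹ := by
    intro l hl
    rw [show (-(1:ℝ)/2) = -(1/2 : ℝ) by norm_num, Real.rpow_neg hl.le, Real.sqrt_eq_rpow]
  -- Step 1: layer cake identity
  have key : ∀ l : ℝ, 0 < l →
      ∫ ω, (1 - Real.exp (-(l * U ω))) ∂μ
        = ∫ t in Ioi (0:ℝ), P t * (l * Real.exp (-(l * t))) := by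
    intro l hl
    have gcont : Continuous fun t : ℝ => l * Real.exp (-(l * t)) :=
      continuous_const.mul ((continuous_const.mul continuous_id).neg.rexp)
    have hint : ∀ x : ℝ, ∫ t in (0:ℝ)..x, l * Real.exp (-(l * t)) = 1 - Real.exp (-(l * x)) := by
      intro x
      have hderiv : ∀ t ∈ uIcc (0:ℝ) x,
          HasDerivAt (fun t => -Real.exp (-(l * t))) (l * Real.exp (-(l * t))) t := by
        intro t _
        have h1 : HasDerivAt (fun t : ℝ => -(l * t)) (-l) t := by
          simpa using ((hasDerivAt_id t).const_mul l).fun_neg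
        have h2 : HasDerivAt (fun t => -Real.exp (-(l * t))) (-(Real.exp (-(l * t)) * -l)) t :=
          h1.exp.fun_neg
        convert h2 using 1
        ring
      rw [intervalIntegral.integral_eq_sub_of_hasDerivAt hderiv (gcont.intervalIntegrable 0 x)]
      simp only [mul_zero, neg_zero, Real.exp_zero]
      ring
    have lint := lintegral_comp_eq_lintegral_meas_lt_mul μ
      (Eventually.of_forall hU0) hU.aemeasurable
      (fun t _ => gcont.intervalIntegrable 0 t)
      (Eventually.of_forall fun t => by positivity)
    simp_rw [hint] at lint
    have hnn : ∀ ω, 0 ≤ 1 - Real.exp (-(l * U ω)) := by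
      intro ω
      have h1 : -(l * U ω) ≤ 0 := neg_nonpos.mpr (mul_nonneg hl.le (hU0 ω))
      have := Real.exp_le_exp.mpr h1
      simp only [Real.exp_zero] at this
      linarith
    have meas1 : AEStronglyMeasurable (fun ω => 1 - Real.exp (-(l * U ω))) μ :=
      (measurable_const.sub (Real.measurable_exp.comp (hU.const_mul l).neg)).aestronglyMeasurable
    have meas2 : AEStronglyMeasurable (fun t => P t * (l * Real.exp (-(l * t))))
        (volume.restrict (Ioi (0:ℝ))) :=
      (hPmeas.mul gcont.measurable).aestronglyMeasurable
    rw [integral_eq_lintegral_of_nonneg_ae (Eventually.of_forall hnn) meas1,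
      integral_eq_lintegral_of_nonneg_ae
        (Eventually.of_forall fun t => mul_nonneg (hPnn t)
          (mul_nonneg hl.le (Real.exp_pos _).le)) meas2]
    congr 1
    rw [lint]
    apply lintegral_congr
    intro t
    rw [ENNReal.ofReal_mul (hPnn t), ENNReal.ofReal_toReal (measure_ne_top μ _)]
  -- Step 2: substitution
  set F : ℝ → ℝ → ℝ := fun l x => (Real.sqrt l)⁻¹ * (P (l⁻¹ * x) * Real.exp (-x)) with hFdef
  have sub : ∀ l : ℝ, 0 < l →
      l ^ (-(1:ℝ)/2) * ∫ ω, (1 - Real.exp (-(l * U ω))) ∂μ = ∫ x in Ioi (0:ℝ), F l x := by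
    intro l hl
    have hcv := integral_comp_mul_left_Ioi
      (fun t => P t * (l * Real.exp (-(l * t)))) 0 (inv_pos.2 hl)
    simp only [mul_zero, inv_inv, smul_eq_mul, mul_inv_cancel_left₀ hl.ne'] at hcv
    -- hcv : ∫ x in Ioi 0, P (l⁻¹ * x) * (l * exp (-x)) = l * ∫ t in Ioi 0, P t * (l * exp (-(l*t)))
    rw [hrpow l hl, key l hl]
    have h1 : ∫ x in Ioi (0:ℝ), P (l⁻¹ * x) * (l * Real.exp (-x))
        = l * ∫ x in Ioi (0:ℝ), P (l⁻¹ * x) * Real.exp (-x) := by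
      rw [← integral_const_mul]
      congr 1 with x
      ring
    have h2 : ∫ x in Ioi (0:ℝ), F l x
        = (Real.sqrt l)⁻¹ * ∫ x in Ioi (0:ℝ), P (l⁻¹ * x) * Real.exp (-x) := by
      rw [← integral_const_mul]
    have h3 : ∫ t in Ioi (0:ℝ), P t * (l * Real.exp (-(l * t)))
        = ∫ x in Ioi (0:ℝ), P (l⁻¹ * x) * Real.exp (-x) :=
      mul_left_cancel₀ hl.ne' (by rw [← h1, hcv])
    rw [h3, h2]
  -- Step 3: dominated convergence setup
  obtain ⟨T₀, hT₀⟩ := eventually_atTop.mp (htail.eventually_lt_const (lt_add_one C))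
  set T : ℝ := max T₀ 1 with hTdef
  have hT1 : (1:ℝ) ≤ T := le_max_right _ _
  have hT0 : (0:ℝ) < T := lt_of_lt_of_le one_pos hT1
  have hTtail : ∀ t, T ≤ t → Real.sqrt t * P t ≤ C + 1 := fun t ht =>
    (hT₀ t (le_trans (le_max_left _ _) ht)).le
  set K : ℝ := max (C + 1) (Real.sqrt T) with hKdef
  have hK0 : 0 ≤ K := le_trans (by linarith) (le_max_left _ _)
  set bound : ℝ → ℝ := fun x => K * (Real.exp (-x) * x ^ ((1/2 : ℝ) - 1)) with hbdef
  have hbint : IntegrableOn bound (Ioi (0:ℝ)) :=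
    (Real.GammaIntegral_convergent one_half_pos).const_mul K
  have hxpow : ∀ x : ℝ, 0 < x → x ^ ((1/2 : ℝ) - 1) = (Real.sqrt x)⁻¹ := by
    intro x hx
    rw [show ((1/2 : ℝ) - 1) = -(1/2 : ℝ) by norm_num, Real.rpow_neg hx.le, Real.sqrt_eq_rpow]
  -- the core bound
  have hcore : ∀ l : ℝ, 0 < l → ∀ x : ℝ, 0 < x →
      Real.sqrt x * P (l⁻¹ * x) ≤ K * Real.sqrt l := by
    intro l hl x hx
    rcases le_or_gt T (l⁻¹ * x) with h | h
    · have h1 : Real.sqrt (l⁻¹ * x) * P (l⁻¹ * x) ≤ C + 1 := hTtail _ h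
      have hx' : Real.sqrt x = Real.sqrt l * Real.sqrt (l⁻¹ * x) := by
        rw [← Real.sqrt_mul hl.le, mul_inv_cancel_left₀ hl.ne']
      calc Real.sqrt x * P (l⁻¹ * x)
          = Real.sqrt l * (Real.sqrt (l⁻¹ * x) * P (l⁻¹ * x)) := by rw [hx']; ring
        _ ≤ Real.sqrt l * (C + 1) :=
            mul_le_mul_of_nonneg_left h1 (Real.sqrt_nonneg l)
        _ ≤ K * Real.sqrt l := by
            rw [mul_comm]
            exact mul_le_mul_of_nonneg_right (le_max_left _ _) (Real.sqrt_nonneg l)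
    · have hxT : x ≤ T * l := by
        have := mul_lt_mul_of_pos_right h hl
        rw [inv_mul_eq_div, div_mul_cancel₀ _ hl.ne'] at this
        linarith
      calc Real.sqrt x * P (l⁻¹ * x)
          ≤ Real.sqrt x * 1 := mul_le_mul_of_nonneg_left (hPle1 _) (Real.sqrt_nonneg _)
        _ = Real.sqrt x := mul_one _
        _ ≤ Real.sqrt (T * l) := Real.sqrt_le_sqrt hxT
        _ = Real.sqrt T * Real.sqrt l := Real.sqrt_mul hT0.le l
        _ ≤ K * Real.sqrt l :=
            mul_le_mul_of_nonneg_right (le_max_right _ _) (Real.sqrt_nonneg l)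
  have hFmeas : ∀ l : ℝ, AEStronglyMeasurable (F l) (volume.restrict (Ioi (0:ℝ))) := by
    intro l
    exact (((hPmeas.comp (measurable_const_mul l⁻¹)).mul
      (Real.measurable_exp.comp measurable_neg)).const_mul _).aestronglyMeasurable
  have h_bound : ∀ᶠ l in nhdsWithin (0:ℝ) (Ioi 0),
      ∀ᵐ x ∂(volume.restrict (Ioi (0:ℝ))), ‖F l x‖ ≤ bound x := by
    filter_upwards [self_mem_nhdsWithin] with l hl
    rw [ae_restrict_iff' measurableSet_Ioi]
    refine Eventually.of_forall fun x hx => ?_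
    have hl' : (0:ℝ) < l := hl
    have hx' : (0:ℝ) < x := hx
    have hsl : 0 < Real.sqrt l := Real.sqrt_pos.2 hl'
    have hsx : 0 < Real.sqrt x := Real.sqrt_pos.2 hx'
    have hFnn : 0 ≤ F l x :=
      mul_nonneg (inv_nonneg.2 hsl.le) (mul_nonneg (hPnn _) (Real.exp_pos _).le)
    rw [Real.norm_eq_abs, abs_of_nonneg hFnn]
    have hmain : (Real.sqrt l)⁻¹ * P (l⁻¹ * x) ≤ K * (Real.sqrt x)⁻¹ := by
      rw [inv_mul_eq_div, ← div_eq_mul_inv, div_le_div_iff₀ hsl hsx]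
      calc P (l⁻¹ * x) * Real.sqrt x = Real.sqrt x * P (l⁻¹ * x) := mul_comm _ _
        _ ≤ K * Real.sqrt l := hcore l hl' x hx'
    calc F l x = ((Real.sqrt l)⁻¹ * P (l⁻¹ * x)) * Real.exp (-x) := by
          rw [hFdef]; ring
      _ ≤ (K * (Real.sqrt x)⁻¹) * Real.exp (-x) :=
          mul_le_mul_of_nonneg_right hmain (Real.exp_pos _).le
      _ = bound x := by simp only [hbdef]; rw [hxpow x hx']; ring
  have h_lim : ∀ᵐ x ∂(volume.restrict (Ioi (0:ℝ))),
      Tendsto (fun l => F l x) (nhdsWithin (0:ℝ) (Ioi 0))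
        (nhds (C * (Real.exp (-x) * x ^ ((1/2 : ℝ) - 1)))) := by
    rw [ae_restrict_iff' measurableSet_Ioi]
    refine Eventually.of_forall fun x hx => ?_
    have hx' : (0:ℝ) < x := hx
    have hsx : 0 < Real.sqrt x := Real.sqrt_pos.2 hx'
    have hT1 : Tendsto (fun l : ℝ => l⁻¹ * x) (nhdsWithin (0:ℝ) (Ioi 0)) atTop := by
      simpa [mul_comm] using tendsto_inv_nhdsGT_zero.atTop_mul_const hx'
    have hT2 : Tendsto (fun l : ℝ => Real.sqrt (l⁻¹ * x) * P (l⁻¹ * x))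
        (nhdsWithin (0:ℝ) (Ioi 0)) (nhds C) := htail.comp hT1
    have hT3 : Tendsto (fun l : ℝ =>
        (Real.sqrt (l⁻¹ * x) * P (l⁻¹ * x)) * ((Real.sqrt x)⁻¹ * Real.exp (-x)))
        (nhdsWithin (0:ℝ) (Ioi 0))
        (nhds (C * ((Real.sqrt x)⁻¹ * Real.exp (-x)))) := hT2.mul_const _
    have heq : (fun l : ℝ =>
        (Real.sqrt (l⁻¹ * x) * P (l⁻¹ * x)) * ((Real.sqrt x)⁻¹ * Real.exp (-x)))
        =ᶠ[nhdsWithin (0:ℝ) (Ioi 0)] fun l => F l x := by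
      filter_upwards [self_mem_nhdsWithin] with l hl
      have hl' : (0:ℝ) < l := hl
      have h1 : Real.sqrt (l⁻¹ * x) = (Real.sqrt l)⁻¹ * Real.sqrt x := by
        rw [Real.sqrt_mul (inv_nonneg.2 hl'.le), Real.sqrt_inv]
      rw [hFdef]
      simp only [h1]
      field_simp
    have := hT3.congr' heq
    convert this using 2
    rw [hxpow x hx']
    ring
  have main := tendsto_integral_filter_of_dominated_convergence bound
    (Eventually.of_forall hFmeas) h_bound hbint h_lim
  have hval : ∫ x in Ioi (0:ℝ), C * (Real.exp (-x) * x ^ ((1/2 : ℝ) - 1))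
      = C * Real.sqrt π := by
    rw [integral_const_mul, ← Real.Gamma_eq_integral one_half_pos, Real.Gamma_one_half_eq]
  rw [hval] at main
  refine main.congr' ?_
  filter_upwards [self_mem_nhdsWithin] with l hl
  exact (sub l hl).symm
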